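/- Let D = {a·k/2^m : m ∈ ℕ, 0 ≤ k ≤ 2^m} be the set of dyadic points of [0,a], and for d ∈ D let x_d denote the limit of the Euler approximations at d. If (c_n) and (d_n) are sequences in D converging to the same point t ∈ [0,a], then the sequences (x_{c_n}) and (x_{d_n}) both converge and have the same limit. -/

import Mathlib

open Filter Topology Set

/-- If (c_n) and (d_n) are sequences of dyadic points in D converging to the
same point t ∈ [0,a], then (x_{c_n}) and (x_{d_n}) both converge and have the same limit. -/
theorem dyadic_limits_along_sequences
    (a M L x₀ : ℝ) (ha : 0 < a) (hM : 0 < M) (hL : 0 < L)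
    (U : Set (ℝ × ℝ))
    (hU : U = Set.Icc (0 : ℝ) a ×ˢ Set.Icc (x₀ - M * a) (x₀ + M * a))
    (f : ℝ × ℝ → ℝ)
    (hf_lip : ∀ u ∈ U, ∀ v ∈ U, |f u - f v| ≤ L * (|u.1 - v.1| + |u.2 - v.2|))
    (hf_bdd : ∀ u ∈ U, |f u| ≤ M)
    (X : ℕ → ℕ → ℝ)
    (hX0 : ∀ m, X m 0 = x₀)
    (hXs : ∀ m k, X m (k + 1) = X m k + a / 2 ^ m * f (a * k / 2 ^ m, X m k))
    (D : Set ℝ) (hD : D = {r : ℝ | ∃ m k : ℕ, k ≤ 2 ^ m ∧ r = a * k / 2 ^ m})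
    (xd : ℝ → ℝ)
    (hxd : ∀ m k : ℕ, k ≤ 2 ^ m →
      Tendsto (fun n : ℕ => X (m + n) (2 ^ n * k)) atTop (𝓝 (xd (a * k / 2 ^ m))))
    (t : ℝ) (ht : t ∈ Set.Icc (0 : ℝ) a)
    (c d : ℕ → ℝ) (hc : ∀ n, c n ∈ D) (hd : ∀ n, d n ∈ D)
    (hct : Tendsto c atTop (𝓝 t)) (hdt : Tendsto d atTop (𝓝 t)) :
    ∃ ℓ : ℝ, Tendsto (fun n => xd (c n)) atTop (𝓝 ℓ) ∧
      Tendsto (fun n => xd (d n)) atTop (𝓝 ℓ) := by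
  -- Step A: the iterates stay in the strip
  have hpow : ∀ m : ℕ, (0:ℝ) < 2 ^ m := fun m => by positivity
  have keyA : ∀ m k : ℕ, k ≤ 2 ^ m → |X m k - x₀| ≤ M * a * k / 2 ^ m := by
    intro m k
    induction k with
    | zero => intro _; simp [hX0]
    | succ k ih =>
      intro hk1
      have hk : k ≤ 2 ^ m := le_trans (Nat.le_succ k) hk1
      have ihk := ih (le_trans (Nat.le_succ k) hk1)
      have hmem : (a * k / 2 ^ m, X m k) ∈ U := by
        rw [hU]
        constructor
        · constructor
          · positivity
          · rw [div_le_iff₀ (hpow m)]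
            have : (k:ℝ) ≤ 2 ^ m := by exact_mod_cast hk
            exact mul_le_mul_of_nonneg_left this ha.le
        · have hle : M * a * k / 2 ^ m ≤ M * a := by
            rw [div_le_iff₀ (hpow m)]
            have : (k:ℝ) ≤ 2 ^ m := by exact_mod_cast hk
            exact mul_le_mul_of_nonneg_left this (by positivity)
          have := abs_le.mp (le_trans ihk hle)
          constructor <;> linarith [this.1, this.2]
      have hfb := hf_bdd _ hmem
      have : |X m (k+1) - x₀| ≤ |X m k - x₀| + a / 2 ^ m * |f (a * k / 2 ^ m, X m k)| := by
        rw [hXs]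
        calc |X m k + a / 2 ^ m * f (a * ↑k / 2 ^ m, X m k) - x₀|
            ≤ |X m k - x₀| + |a / 2 ^ m * f (a * ↑k / 2 ^ m, X m k)| := by
              have := abs_add_le (X m k - x₀) (a / 2 ^ m * f (a * ↑k / 2 ^ m, X m k))
              rw [show X m k + a / 2 ^ m * f (a * ↑k / 2 ^ m, X m k) - x₀ = (X m k - x₀) + a / 2 ^ m * f (a * ↑k / 2 ^ m, X m k) by ring]; exact this
          _ = |X m k - x₀| + a / 2 ^ m * |f (a * ↑k / 2 ^ m, X m k)| := by
              rw [abs_mul, abs_of_pos (by positivity : (0:ℝ) < a / 2 ^ m)]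
      have h2 : a / 2 ^ m * |f (a * ↑k / 2 ^ m, X m k)| ≤ a / 2 ^ m * M :=
        mul_le_mul_of_nonneg_left hfb (by positivity)
      have : |X m (k+1) - x₀| ≤ M * a * k / 2 ^ m + a / 2 ^ m * M := by linarith
      calc |X m (k+1) - x₀| ≤ M * a * k / 2 ^ m + a / 2 ^ m * M := this
        _ = M * a * (↑(k+1)) / 2 ^ m := by push_cast; field_simp
  -- Step B: one-step bound
  have keyB : ∀ m k : ℕ, k + 1 ≤ 2 ^ m → |X m (k+1) - X m k| ≤ M * a / 2 ^ m := by
    intro m k hk1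
    have hk : k ≤ 2 ^ m := le_trans (Nat.le_succ k) hk1
    have hmem : (a * k / 2 ^ m, X m k) ∈ U := by
      rw [hU]
      refine ⟨⟨by positivity, ?_⟩, ?_⟩
      · rw [div_le_iff₀ (hpow m)]
        have : (k:ℝ) ≤ 2 ^ m := by exact_mod_cast hk
        exact mul_le_mul_of_nonneg_left this ha.le
      · have hle : M * a * k / 2 ^ m ≤ M * a := by
          rw [div_le_iff₀ (hpow m)]
          have : (k:ℝ) ≤ 2 ^ m := by exact_mod_cast hk
          exact mul_le_mul_of_nonneg_left this (by positivity)
        have := abs_le.mp (le_trans (keyA m k hk) hle)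
        constructor <;> linarith [this.1, this.2]
    have hfb := hf_bdd _ hmem
    rw [hXs]
    have : X m k + a / 2 ^ m * f (a * ↑k / 2 ^ m, X m k) - X m k
        = a / 2 ^ m * f (a * ↑k / 2 ^ m, X m k) := by ring
    rw [this, abs_mul, abs_of_pos (by positivity : (0:ℝ) < a / 2 ^ m)]
    calc a / 2 ^ m * |f (a * ↑k / 2 ^ m, X m k)| ≤ a / 2 ^ m * M :=
          mul_le_mul_of_nonneg_left hfb (by positivity)
      _ = M * a / 2 ^ m := by ring
  -- Step C: Lipschitz in k
  have keyC : ∀ m j k : ℕ, j ≤ k → k ≤ 2 ^ m →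
      |X m k - X m j| ≤ M * a * ((k:ℝ) - j) / 2 ^ m := by
    intro m j k hjk
    induction k, hjk using Nat.le_induction with
    | base => intro _; simp
    | succ k hjk ih =>
      intro hk1
      have ihk := ih (le_trans (Nat.le_succ k) hk1)
      have hB := keyB m k hk1
      calc |X m (k+1) - X m j| ≤ |X m (k+1) - X m k| + |X m k - X m j| := by
            have := abs_add_le (X m (k+1) - X m k) (X m k - X m j)
            simpa only [sub_add_sub_cancel] using this
        _ ≤ M * a / 2 ^ m + M * a * ((k:ℝ) - j) / 2 ^ m := by linarith
        _ = M * a * ((↑(k+1):ℝ) - j) / 2 ^ m := by push_cast; field_simp; ring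
  -- Step D': Lipschitz of xd at common denominator
  have keyD' : ∀ μ K K' : ℕ, K ≤ 2 ^ μ → K' ≤ 2 ^ μ → K' ≤ K →
      |xd (a * K / 2 ^ μ) - xd (a * K' / 2 ^ μ)| ≤ M * a * ((K:ℝ) - K') / 2 ^ μ := by
    intro μ K K' hK hK' hKK
    have h1 := hxd μ K hK
    have h2 := hxd μ K' hK'
    have htendsto : Tendsto (fun n : ℕ => |X (μ + n) (2 ^ n * K) - X (μ + n) (2 ^ n * K')|)
        atTop (𝓝 |xd (a * K / 2 ^ μ) - xd (a * K' / 2 ^ μ)|) := (h1.sub h2).abs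
    refine le_of_tendsto' htendsto ?_
    intro n
    have hle : 2 ^ n * K' ≤ 2 ^ n * K := Nat.mul_le_mul_left _ hKK
    have hle2 : 2 ^ n * K ≤ 2 ^ (μ + n) := by
      rw [pow_add]
      calc 2 ^ n * K ≤ 2 ^ n * 2 ^ μ := Nat.mul_le_mul_left _ hK
        _ = 2 ^ μ * 2 ^ n := Nat.mul_comm _ _
    have := keyC (μ + n) (2 ^ n * K') (2 ^ n * K) hle hle2
    calc |X (μ + n) (2 ^ n * K) - X (μ + n) (2 ^ n * K')|
        ≤ M * a * ((↑(2 ^ n * K):ℝ) - ↑(2 ^ n * K')) / 2 ^ (μ + n) := this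
      _ = M * a * ((K:ℝ) - K') / 2 ^ μ := by
          push_cast
          rw [pow_add]
          field_simp
  -- Step D: Lipschitz on D
  have keyD : ∀ r ∈ D, ∀ r' ∈ D, |xd r - xd r'| ≤ M * |r - r'| := by
    have main : ∀ μ K K' : ℕ, K ≤ 2 ^ μ → K' ≤ 2 ^ μ → K' ≤ K →
        |xd (a * K / 2 ^ μ) - xd (a * K' / 2 ^ μ)| ≤ M * |a * K / 2 ^ μ - a * K' / 2 ^ μ| := by
      intro μ K K' hK hK' h
      have hle := keyD' μ K K' hK hK' h
      have hcast : (K':ℝ) ≤ K := by exact_mod_cast h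
      have heq : M * |a * ↑K / 2 ^ μ - a * ↑K' / 2 ^ μ| = M * a * ((K:ℝ) - K') / 2 ^ μ := by
        rw [show a * (K:ℝ) / 2 ^ μ - a * K' / 2 ^ μ = a * ((K:ℝ) - K') / 2 ^ μ by ring,
          abs_of_nonneg (div_nonneg (mul_nonneg ha.le (sub_nonneg.mpr hcast)) (hpow μ).le)]
        ring
      rw [heq]; exact hle
    have main2 : ∀ μ K K' : ℕ, K ≤ 2 ^ μ → K' ≤ 2 ^ μ →
        |xd (a * K / 2 ^ μ) - xd (a * K' / 2 ^ μ)| ≤ M * |a * K / 2 ^ μ - a * K' / 2 ^ μ| := by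
      intro μ K K' hK hK'
      rcases le_total K' K with h | h
      · exact main μ K K' hK hK' h
      · rw [abs_sub_comm, abs_sub_comm (a * (K:ℝ) / 2 ^ μ)]
        exact main μ K' K hK' hK h
    intro r hr r' hr'
    rw [hD] at hr hr'
    obtain ⟨m, k, hk, rfl⟩ := hr
    obtain ⟨m', k', hk', rfl⟩ := hr'
    have e1 : a * k / 2 ^ m = a * ↑(2 ^ m' * k) / 2 ^ (m + m') := by
      push_cast
      rw [pow_add]
      field_simp
    have e2 : a * k' / 2 ^ m' = a * ↑(2 ^ m * k') / 2 ^ (m + m') := by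
      push_cast
      rw [pow_add]
      field_simp
    rw [e1, e2]
    apply main2
    · calc 2 ^ m' * k ≤ 2 ^ m' * 2 ^ m := Nat.mul_le_mul_left _ hk
        _ = 2 ^ (m + m') := by rw [pow_add, Nat.mul_comm]
    · rw [pow_add]
      exact Nat.mul_le_mul_left _ hk'
  -- Step E: conclude
  have hcauchy : CauchySeq (fun n => xd (c n)) := by
    rw [Metric.cauchySeq_iff]
    intro ε hε
    have hcc : CauchySeq c := hct.cauchySeq
    rw [Metric.cauchySeq_iff] at hcc
    obtain ⟨N, hN⟩ := hcc (ε / M) (by positivity)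
    refine ⟨N, fun p hp q hq => ?_⟩
    have := keyD (c p) (hc p) (c q) (hc q)
    have hd2 := hN p hp q hq
    rw [Real.dist_eq] at hd2 ⊢
    calc |xd (c p) - xd (c q)| ≤ M * |c p - c q| := this
      _ < M * (ε / M) := by
          apply mul_lt_mul_of_pos_left hd2 hM
      _ = ε := by field_simp
  obtain ⟨ℓ, hℓ⟩ := cauchySeq_tendsto_of_complete hcauchy
  refine ⟨ℓ, hℓ, ?_⟩
  have hdiff : Tendsto (fun n => xd (d n) - xd (c n)) atTop (𝓝 0) := by
    have hbound : ∀ n, ‖xd (d n) - xd (c n)‖ ≤ M * |d n - c n| := fun n => by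
      simpa [Real.norm_eq_abs] using keyD (d n) (hd n) (c n) (hc n)
    have h0 : Tendsto (fun n => d n - c n) atTop (𝓝 0) := by
      simpa using hdt.sub hct
    have habs : Tendsto (fun n => |d n - c n|) atTop (𝓝 0) := by
      simpa using h0.abs
    have hten : Tendsto (fun n => M * |d n - c n|) atTop (𝓝 0) := by
      simpa using habs.const_mul M
    exact squeeze_zero_norm hbound hten
  have hfin := hdiff.add hℓ
  simp only [zero_add] at hfin
  have : (fun n => xd (d n) - xd (c n) + xd (c n)) = fun n => xd (d n) := by
    funext n; ring
  rwa [this] at hfin
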